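/- Under the hypotheses of the generalized Lax–Milgram theorem (same setting as above), the operator S is closed and its domain D(S) is dense in both V and H. -/

import Mathlib

set_option maxHeartbeats 1000000


/-- STATEMENT 12 (generalized Lax–Milgram, bijectivity): Let `V` be a Hilbert space
densely and continuously embedded (via `e`) in a Hilbert space `H`, and let `a` be a
bounded sesquilinear form on `V` satisfying the generalized coercivity conditions
`|a(u,u)| + |a(u,Φ₁u)| ≥ α‖u‖²_V` and `|a(u,u)| + |a(Φ₂u,u)| ≥ α‖u‖²_V`, where
`Φ₁, Φ₂ ∈ L(V)` extend to bounded operators on `H` and `α > 0`.  Let `S` be the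
operator on `H` with domain `D(S) = {u ∈ V : v ↦ a(u,v) is H-continuous}` defined by
`a(u,v) = ⟨Su, v⟩_H`.  Then `S` is a closed operator and its domain `D(S)` is dense in both `V` and `H`. -/
theorem stmt13 {V H : Type*}
    [NormedAddCommGroup V] [InnerProductSpace ℂ V] [CompleteSpace V]
    [NormedAddCommGroup H] [InnerProductSpace ℂ H] [CompleteSpace H]
    (e : V →L[ℂ] H) (he_inj : Function.Injective e) (he_dense : DenseRange e)
    (a : V →ₛₗ[starRingEnd ℂ] V →ₗ[ℂ] ℂ)
    (habound : ∃ M : ℝ, ∀ u v : V, ‖a u v‖ ≤ M * ‖u‖ * ‖v‖)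
    (Φ₁ Φ₂ : V →L[ℂ] V)
    (hΦ₁ext : ∃ Ψ₁ : H →L[ℂ] H, ∀ v : V, Ψ₁ (e v) = e (Φ₁ v))
    (hΦ₂ext : ∃ Ψ₂ : H →L[ℂ] H, ∀ v : V, Ψ₂ (e v) = e (Φ₂ v))
    (α : ℝ) (hα : 0 < α)
    (hcoer1 : ∀ u : V, α * ‖u‖ ^ 2 ≤ ‖a u u‖ + ‖a u (Φ₁ u)‖)
    (hcoer2 : ∀ u : V, α * ‖u‖ ^ 2 ≤ ‖a u u‖ + ‖a (Φ₂ u) u‖)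
    (S : H →ₗ.[ℂ] H)
    (hSdom : ∀ x : H, x ∈ S.domain ↔
      ∃ u : V, e u = x ∧ ∃ C : ℝ, ∀ v : V, ‖a u v‖ ≤ C * ‖e v‖)
    (hSval : ∀ (u : V) (hx : e u ∈ S.domain), ∀ v : V,
      a u v = (inner ℂ (S ⟨e u, hx⟩) (e v) : ℂ)) :
    S.IsClosed ∧ Dense (S.domain : Set H) ∧ Dense {u : V | e u ∈ S.domain} := by
  classical
  obtain ⟨M₀, hM₀⟩ := habound
  set M : ℝ := max M₀ 0 with hMdef
  have hMnn : 0 ≤ M := le_max_right _ _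
  have hM : ∀ u v : V, ‖a u v‖ ≤ M * ‖u‖ * ‖v‖ := by
    intro u v
    refine (hM₀ u v).trans ?_
    exact mul_le_mul_of_nonneg_right
      (mul_le_mul_of_nonneg_right (le_max_left _ _) (norm_nonneg u)) (norm_nonneg v)
  -- The bounded operator associated to the form
  set F : V → (V →L[ℂ] ℂ) := fun u => LinearMap.mkContinuous (a u) (M * ‖u‖) (hM u) with hF
  have hFapp : ∀ u v : V, F u v = a u v := fun u v => rfl
  have hFadd : ∀ u w : V, F (u + w) = F u + F w := by
    intro u w; ext v
    simp only [ContinuousLinearMap.add_apply, hFapp, map_add, LinearMap.add_apply]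
  have hFsmul : ∀ (c : ℂ) (u : V), F (c • u) = (starRingEnd ℂ) c • F u := by
    intro c u; ext v
    simp only [ContinuousLinearMap.coe_smul', Pi.smul_apply, hFapp, map_smulₛₗ,
      LinearMap.smul_apply, smul_eq_mul]
  set A₀ : V →ₗ[ℂ] V :=
    { toFun := fun u => (InnerProductSpace.toDual ℂ V).symm (F u)
      map_add' := by
        intro u w
        rw [hFadd, map_add]
      map_smul' := by
        intro c u
        rw [hFsmul, LinearIsometryEquiv.map_smulₛₗ]
        simp } with hA₀def
  have hA₀norm : ∀ u : V, ‖A₀ u‖ ≤ M * ‖u‖ := by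
    intro u
    show ‖(InnerProductSpace.toDual ℂ V).symm (F u)‖ ≤ M * ‖u‖
    rw [LinearIsometryEquiv.norm_map]
    exact LinearMap.mkContinuous_norm_le _ (by positivity) _
  set A : V →L[ℂ] V := A₀.mkContinuous M hA₀norm with hAdef
  have hA : ∀ u v : V, (inner ℂ (A u) v : ℂ) = a u v := by
    intro u v
    show (inner ℂ ((InnerProductSpace.toDual ℂ V).symm (F u)) v : ℂ) = a u v
    rw [InnerProductSpace.toDual_symm_apply]
    exact hFapp u v
  -- Lower bound and antilipschitz
  have hlb : ∀ u : V, α * ‖u‖ ≤ (1 + ‖Φ₁‖) * ‖A u‖ := by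
    intro u
    rcases eq_or_ne u 0 with rfl | hu
    · simp
    · have h1 := hcoer1 u
      have h2 : ‖a u u‖ ≤ ‖A u‖ * ‖u‖ := by
        rw [← hA]; exact norm_inner_le_norm _ _
      have h3 : ‖a u (Φ₁ u)‖ ≤ ‖A u‖ * (‖Φ₁‖ * ‖u‖) := by
        rw [← hA]
        exact (norm_inner_le_norm _ _).trans
          (by gcongr; exact Φ₁.le_opNorm u)
      have hun : 0 < ‖u‖ := norm_pos_iff.mpr hu
      have : α * ‖u‖ * ‖u‖ ≤ ((1 + ‖Φ₁‖) * ‖A u‖) * ‖u‖ := by nlinarith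
      exact le_of_mul_le_mul_right this hun
  have hΦ₁nn : (0:ℝ) ≤ 1 + ‖Φ₁‖ := by positivity
  have hanti : AntilipschitzWith ⟨(1 + ‖Φ₁‖) / α, by positivity⟩ A := by
    apply ContinuousLinearMap.antilipschitz_of_bound
    intro x
    have := hlb x
    have hAx : 0 ≤ ‖A x‖ := norm_nonneg _
    show ‖x‖ ≤ (1 + ‖Φ₁‖) / α * ‖A x‖
    rw [div_mul_eq_mul_div, le_div_iff₀ hα]
    linarith
  have hAinj : Function.Injective A := hanti.injective
  -- Surjectivity of A
  have hker : LinearMap.ker (A : V →ₗ[ℂ] V) = ⊥ := LinearMap.ker_eq_bot.mpr hAinj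
  have hrange : LinearMap.range (A : V →ₗ[ℂ] V) = ⊤ := by
    have hdense : (LinearMap.range (A : V →ₗ[ℂ] V))ᗮ = ⊥ := by
      rw [Submodule.eq_bot_iff]
      intro w hw
      have h0 : ∀ u : V, a u w = 0 := by
        intro u
        rw [← hA]
        exact hw (A u) (LinearMap.mem_range_self _ u)
      have h2 := hcoer2 w
      rw [h0 w, h0 (Φ₂ w)] at h2
      simp only [norm_zero, add_zero] at h2
      have : ‖w‖ ^ 2 ≤ 0 := by nlinarith
      have : ‖w‖ = 0 := by nlinarith [sq_nonneg ‖w‖, norm_nonneg w]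
      exact norm_eq_zero.mp this
    have hclosed : IsClosed ((LinearMap.range (A : V →ₗ[ℂ] V) : Submodule ℂ V) : Set V) := by
      have : ((LinearMap.range (A : V →ₗ[ℂ] V) : Submodule ℂ V) : Set V) = Set.range A := by
        ext x; simp [LinearMap.mem_range]
      rw [this]
      exact hanti.isClosed_range A.uniformContinuous
    have := Submodule.topologicalClosure_eq_top_iff.mpr hdense
    rwa [hclosed.submodule_topologicalClosure_eq] at this
  set Aeq : V ≃L[ℂ] V := ContinuousLinearEquiv.ofBijective A hker hrange with hAeqdef
  have hAeqapp : ∀ x : V, Aeq x = A x := fun x => rfl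
  -- the solution operator
  set T : H →L[ℂ] V :=
    (Aeq.symm : V →L[ℂ] V).comp (ContinuousLinearMap.adjoint e) with hTdef
  have hAT : ∀ h : H, A (T h) = ContinuousLinearMap.adjoint e h := by
    intro h
    have : T h = Aeq.symm (ContinuousLinearMap.adjoint e h) := rfl
    rw [this, ← hAeqapp, Aeq.apply_symm_apply]
  have hTa : ∀ (h : H) (v : V), a (T h) v = (inner ℂ h (e v) : ℂ) := by
    intro h v
    rw [← hA, hAT, ContinuousLinearMap.adjoint_inner_left]
  have hTdom : ∀ h : H, e (T h) ∈ S.domain := by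
    intro h
    refine (hSdom _).mpr ⟨T h, rfl, ‖h‖, fun v => ?_⟩
    rw [hTa]
    exact norm_inner_le_norm _ _
  have hST : ∀ (h : H) (hx : e (T h) ∈ S.domain), S ⟨e (T h), hx⟩ = h := by
    intro h hx
    set z : H := S ⟨e (T h), hx⟩ - h with hz
    have hper : ∀ v : V, (inner ℂ z (e v) : ℂ) = 0 := by
      intro v
      rw [hz, inner_sub_left, ← hSval (T h) hx v, hTa, sub_self]
    have hzero : (fun y : H => (inner ℂ z y : ℂ)) = fun _ => 0 := by
      refine Continuous.ext_on he_dense ?_ continuous_const ?_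
      · exact continuous_const.inner continuous_id
      · rintro _ ⟨v, rfl⟩
        exact hper v
    have : (inner ℂ z z : ℂ) = 0 := congrFun hzero z
    have : z = 0 := inner_self_eq_zero.mp this
    have := sub_eq_zero.mp (hz ▸ this)
    exact this
  have hdom_char : ∀ x : H, ∀ hx : x ∈ S.domain, x = e (T (S ⟨x, hx⟩)) := by
    intro x hx
    obtain ⟨u, hu, C, hC⟩ := (hSdom x).mp hx
    have hx' : e u ∈ S.domain := hu ▸ hx
    have hsub : (⟨e u, hx'⟩ : S.domain) = ⟨x, hx⟩ := Subtype.ext hu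
    set h : H := S ⟨x, hx⟩ with hh
    have h1 : ∀ v : V, a u v = a (T h) v := by
      intro v
      rw [hTa, hSval u hx' v, hsub]
    have h2 : A u = A (T h) := by
      apply ext_inner_right ℂ
      intro v
      rw [hA, hA, h1]
    have h3 : u = T h := hAinj h2
    rw [← hu, h3]
  -- graph description
  have hgraph : (S.graph : Set (H × H)) = {p : H × H | p.1 = e (T p.2)} := by
    ext ⟨x, y⟩
    simp only [SetLike.mem_coe, LinearPMap.mem_graph_iff, Set.mem_setOf_eq]
    constructor
    · rintro ⟨⟨x', hx'⟩, h1, h2⟩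
      simp only at h1 h2
      subst h1
      have := hdom_char x' hx'
      rw [h2] at this
      exact this
    · intro hp
      refine ⟨⟨x, hp ▸ hTdom y⟩, rfl, ?_⟩
      have : (⟨x, hp ▸ hTdom y⟩ : S.domain) = ⟨e (T y), hTdom y⟩ := Subtype.ext hp
      rw [this, hST y (hTdom y)]
  -- density
  have hTrange : Set.range (⇑T) ⊆ {u : V | e u ∈ S.domain} := by
    rintro _ ⟨h, rfl⟩
    exact hTdom h
  have hTdense : DenseRange (⇑T) := by
    have h1 : DenseRange (⇑(ContinuousLinearMap.adjoint e)) := by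
      have horth : (LinearMap.range (ContinuousLinearMap.adjoint e : H →ₗ[ℂ] V))ᗮ = ⊥ := by
        rw [Submodule.eq_bot_iff]
        intro w hw
        have h := hw (ContinuousLinearMap.adjoint e (e w))
          (LinearMap.mem_range_self _ _)
        rw [ContinuousLinearMap.adjoint_inner_left] at h
        have hew : e w = 0 := inner_self_eq_zero.mp h
        have : e w = e 0 := by simpa using hew
        exact he_inj this
      have h2 := Submodule.topologicalClosure_eq_top_iff.mpr horth
      have hd : Dense
          ((LinearMap.range (ContinuousLinearMap.adjoint e : H →ₗ[ℂ] V) : Submodule ℂ V) : Set V) :=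
        Submodule.dense_iff_topologicalClosure_eq_top.mpr h2
      have hset : ((LinearMap.range (ContinuousLinearMap.adjoint e : H →ₗ[ℂ] V) :
          Submodule ℂ V) : Set V) = Set.range (⇑(ContinuousLinearMap.adjoint e)) := by
        ext x; simp [LinearMap.mem_range]
      rwa [hset] at hd
    have h2 : DenseRange (⇑Aeq.symm : V → V) := Aeq.symm.surjective.denseRange
    have heq : (⇑T : H → V) =
        (⇑Aeq.symm : V → V) ∘ (⇑(ContinuousLinearMap.adjoint e)) := rfl
    rw [heq]
    exact h2.comp h1 Aeq.symm.continuous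
  have hdenseV : Dense {u : V | e u ∈ S.domain} := hTdense.mono hTrange
  have hdenseH : Dense (S.domain : Set H) := by
    have h1 : Dense (e '' {u : V | e u ∈ S.domain}) :=
      he_dense.dense_image e.continuous hdenseV
    refine h1.mono ?_
    rintro _ ⟨u, hu, rfl⟩
    exact hu
  refine ⟨?_, hdenseH, hdenseV⟩
  show IsClosed (S.graph : Set (H × H))
  rw [hgraph]
  exact isClosed_eq continuous_fst
    (e.continuous.comp (T.continuous.comp continuous_snd))
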